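/- arXiv:1704.08425 — 3 statements merged into one kernel-verified Lean document; each statement's English description precedes it below -/
import Mathlib

section
/- Rank-one characterization of the frequency set via the multiplier cone (pointwise form of Lemma 10): Let n, m ≥ 1, 0 < ν < 2, φ = (π/2)(ν−1), and let α, β, γ ∈ ℝ satisfy either 0 ≤ α ≤ γ or α < 0 < γ. Let T ∈ ℂ^{2×2} be invertible, Δ = T*Δ₀T, Σ = T*Σ₀T, and N ∈ ℂ^{2n×(n+m)}. Then for every nonzero η ∈ ℂ^{n+m}, the following are equivalent: (i) either there exists θ ∈ ℂ with ρ(θ,Δ) = 0, ρ(θ,Σ) ≥ 0 and [I_n, −θI_n]·Nη = 0, or else Δ₁₁ = 0, Σ₁₁ ≥ 0 and the last n entries of Nη are all zero (the θ = ∞ case); (ii) for all Hermitian U, V ∈ ℂ^{n×n} with V positive semidefinite, the (real) value η*N*(Δ ⊗ U + Σ ⊗ V)Nη is ≥ 0. -/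
open Matrix Complex
open scoped Matrix Kronecker ComplexOrder

/-- The largest singular value (ℓ² operator norm) of a complex matrix. -/
noncomputable def sigmaMax {m n : ℕ} (M : Matrix (Fin m) (Fin n) ℂ) : ℝ :=
  ‖LinearMap.toContinuousLinearMap (Matrix.toEuclideanLin M)‖

/-- A real matrix regarded as a complex matrix. -/
noncomputable def cmap {a b : ℕ} (M : Matrix (Fin a) (Fin b) ℝ) : Matrix (Fin a) (Fin b) ℂ :=
  M.map Complex.ofReal

/-- ρ(θ, M) = [θ,1]* M [θ,1], real-valued for Hermitian M. -/
noncomputable def rho (θ : ℂ) (M : Matrix (Fin 2) (Fin 2) ℂ) : ℝ :=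
  (star ![θ, 1] ⬝ᵥ M *ᵥ ![θ, 1]).re

/-- Δ₀ = [[0, e^{iφ}],[e^{−iφ}, 0]]. -/
noncomputable def Delta0 (φ : ℝ) : Matrix (Fin 2) (Fin 2) ℂ :=
  !![0, Complex.exp ((φ : ℂ) * Complex.I);
     Complex.exp (-(φ : ℂ) * Complex.I), 0]

/-- Σ₀ = [[α, β e^{iφ}],[β e^{−iφ}, γ]]. -/
noncomputable def Sigma0 (φ α β γ : ℝ) : Matrix (Fin 2) (Fin 2) ℂ :=
  !![(α : ℂ), (β : ℂ) * Complex.exp ((φ : ℂ) * Complex.I);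
     (β : ℂ) * Complex.exp (-(φ : ℂ) * Complex.I), (γ : ℂ)]

/-- A 3×3 block matrix. -/
noncomputable def block3 {n m p : ℕ}
    (A11 : Matrix (Fin n) (Fin n) ℂ) (A12 : Matrix (Fin n) (Fin m) ℂ)
    (A13 : Matrix (Fin n) (Fin p) ℂ)
    (A21 : Matrix (Fin m) (Fin n) ℂ) (A22 : Matrix (Fin m) (Fin m) ℂ)
    (A23 : Matrix (Fin m) (Fin p) ℂ)
    (A31 : Matrix (Fin p) (Fin n) ℂ) (A32 : Matrix (Fin p) (Fin m) ℂ)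
    (A33 : Matrix (Fin p) (Fin p) ℂ) :
    Matrix ((Fin n ⊕ Fin m) ⊕ Fin p) ((Fin n ⊕ Fin m) ⊕ Fin p) ℂ :=
  Matrix.fromBlocks (Matrix.fromBlocks A11 A12 A21 A22)
    (Matrix.fromRows A13 A23) (Matrix.fromCols A31 A32) A33



lemma herm_form_real {k : ℕ} {A : Matrix (Fin k) (Fin k) ℂ} (hA : A.IsHermitian)
    (w : Fin k → ℂ) : star w ⬝ᵥ A *ᵥ w = ((star w ⬝ᵥ A *ᵥ w).re : ℂ) := by
  have h : (starRingEnd ℂ) (star w ⬝ᵥ A *ᵥ w) = star w ⬝ᵥ A *ᵥ w := by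
    show star (star w ⬝ᵥ A *ᵥ w) = _
    rw [← star_dotProduct (A *ᵥ w) w, star_mulVec, ← Matrix.dotProduct_mulVec, hA.eq]
  exact ((Complex.conj_eq_iff_re).1 h) ▸ rfl

lemma form_transfer {a b : Type*} [Fintype a] [Fintype b] (N : Matrix a b ℂ)
    (M : Matrix a a ℂ) (η : b → ℂ) :
    star η ⬝ᵥ (Nᴴ * M * N) *ᵥ η = star (N *ᵥ η) ⬝ᵥ M *ᵥ (N *ᵥ η) := by
  rw [← Matrix.mulVec_mulVec, ← Matrix.mulVec_mulVec, Matrix.dotProduct_mulVec (star η) Nᴴ,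
    ← Matrix.star_mulVec]

lemma kron_form {n : ℕ} (A : Matrix (Fin 2) (Fin 2) ℂ) (U : Matrix (Fin n) (Fin n) ℂ)
    (x : Fin 2 × Fin n → ℂ) :
    star x ⬝ᵥ (A ⊗ₖ U) *ᵥ x
      = ∑ p : Fin 2, ∑ q : Fin 2,
          A p q * ((star fun i => x (p, i)) ⬝ᵥ U *ᵥ (fun i => x (q, i))) := by
  simp only [dotProduct, mulVec, kroneckerMap_apply, Pi.star_apply,
    Fintype.sum_prod_type, Finset.mul_sum, Finset.sum_mul]
  refine Finset.sum_congr rfl fun p _ => ?_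
  rw [Finset.sum_comm]
  refine Finset.sum_congr rfl fun q _ => Finset.sum_congr rfl fun i _ =>
    Finset.sum_congr rfl fun j _ => by ring

lemma kron_rank_one {n : ℕ} (A : Matrix (Fin 2) (Fin 2) ℂ) (s : Fin n → ℂ)
    (x : Fin 2 × Fin n → ℂ) :
    star x ⬝ᵥ (A ⊗ₖ vecMulVec s (star s)) *ᵥ x
      = star (fun p => ∑ j, star (s j) * x (p, j)) ⬝ᵥ A
          *ᵥ (fun p => ∑ j, star (s j) * x (p, j)) := by
  rw [kron_form]
  simp only [dotProduct, mulVec, vecMulVec_apply, Pi.star_apply, star_sum, star_mul',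
    star_star, Finset.mul_sum, Finset.sum_mul]
  refine Finset.sum_congr rfl fun p _ => Finset.sum_congr rfl fun q _ => ?_
  rw [Finset.sum_comm]
  exact Finset.sum_congr rfl fun i _ => Finset.sum_congr rfl fun j _ => by ring


lemma ro_psd {n : ℕ} (s : Fin n → ℂ) : (vecMulVec s (star s)).PosSemidef := by
  have h : vecMulVec s (star s) = (replicateRow (Fin 1) (star s))ᴴ * replicateRow (Fin 1) (star s) := by
    rw [conjTranspose_replicateRow, star_star]
    exact vecMulVec_eq (Fin 1) _ _
  rw [h]
  exact posSemidef_conjTranspose_mul_self _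

lemma form_scale {k : ℕ} (M : Matrix (Fin k) (Fin k) ℂ) (c : ℂ) (w : Fin k → ℂ) :
    star (c • w) ⬝ᵥ M *ᵥ (c • w) = ((normSq c : ℝ) : ℂ) * (star w ⬝ᵥ M *ᵥ w) := by
  rw [star_smul, mulVec_smul, dotProduct_smul, smul_dotProduct, normSq_eq_conj_mul_self]
  simp [smul_eq_mul]; ring

lemma form2 (M : Matrix (Fin 2) (Fin 2) ℂ) (w w' : Fin 2 → ℂ) :
    star w ⬝ᵥ M *ᵥ w' = star (w 0) * (M 0 0 * w' 0 + M 0 1 * w' 1)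
      + star (w 1) * (M 1 0 * w' 0 + M 1 1 * w' 1) := by
  simp [dotProduct, mulVec, Fin.sum_univ_two]

lemma delta0_herm (φ : ℝ) : (Delta0 φ).IsHermitian := by
  ext i j
  fin_cases i <;> fin_cases j <;>
    simp [Delta0, conjTranspose_apply, ← Complex.exp_conj, _root_.map_mul, Complex.conj_I,
      Complex.conj_ofReal]

lemma sigma0_herm (φ α β γ : ℝ) : (Sigma0 φ α β γ).IsHermitian := by
  ext i j
  fin_cases i <;> fin_cases j <;>
    simp [Sigma0, conjTranspose_apply, ← Complex.exp_conj, _root_.map_mul, Complex.conj_I,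
      Complex.conj_ofReal]

lemma delta0_form (φ : ℝ) (w w' : Fin 2 → ℂ) :
    star w ⬝ᵥ Delta0 φ *ᵥ w' =
      Complex.exp ((φ : ℂ) * Complex.I) * (star (w 0) * w' 1)
        + Complex.exp (-(φ : ℂ) * Complex.I) * (star (w 1) * w' 0) := by
  rw [form2]; simp [Delta0]; ring

lemma sigma0_form (φ α β γ : ℝ) (w w' : Fin 2 → ℂ) :
    star w ⬝ᵥ Sigma0 φ α β γ *ᵥ w' =
      (α : ℂ) * (star (w 0) * w' 0) + (γ : ℂ) * (star (w 1) * w' 1)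
        + (β : ℂ) * (Complex.exp ((φ : ℂ) * Complex.I) * (star (w 0) * w' 1)
            + Complex.exp (-(φ : ℂ) * Complex.I) * (star (w 1) * w' 0)) := by
  rw [form2]; simp [Sigma0]; ring

lemma dot_scale_left {n : ℕ} (c : ℂ) (b w : Fin n → ℂ) (U : Matrix (Fin n) (Fin n) ℂ) :
    (star fun i => c * b i) ⬝ᵥ U *ᵥ w = star c * (star b ⬝ᵥ U *ᵥ w) := by
  simp only [dotProduct, Pi.star_apply, star_mul', Finset.mul_sum]
  exact Finset.sum_congr rfl fun i _ => by ring

lemma dot_scale_right {n : ℕ} (c : ℂ) (b w : Fin n → ℂ) (U : Matrix (Fin n) (Fin n) ℂ) :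
    star b ⬝ᵥ U *ᵥ (fun i => c * w i) = c * (star b ⬝ᵥ U *ᵥ w) := by
  have h : (fun i => c * w i) = c • w := rfl
  rw [h, mulVec_smul, dotProduct_smul, smul_eq_mul]

lemma dot_zero_left {n : ℕ} (w : Fin n → ℂ) (U : Matrix (Fin n) (Fin n) ℂ) :
    (star fun _ : Fin n => (0:ℂ)) ⬝ᵥ U *ᵥ w = 0 := by
  simp [dotProduct]

lemma dot_zero_right {n : ℕ} (b : Fin n → ℂ) (U : Matrix (Fin n) (Fin n) ℂ) :
    star b ⬝ᵥ U *ᵥ (fun _ => (0:ℂ)) = 0 := by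
  simp [dotProduct, mulVec]
lemma kron_form_prop {n : ℕ} (A : Matrix (Fin 2) (Fin 2) ℂ) (U : Matrix (Fin n) (Fin n) ℂ)
    (x : Fin 2 × Fin n → ℂ) (θ : ℂ) (hx : ∀ i, x (0, i) = θ * x (1, i)) :
    star x ⬝ᵥ (A ⊗ₖ U) *ᵥ x
      = (star ![θ, 1] ⬝ᵥ A *ᵥ ![θ, 1])
          * ((star fun i => x (1, i)) ⬝ᵥ U *ᵥ (fun i => x (1, i))) := by
  rw [kron_form, form2]
  have h0 : (fun i => x ((0 : Fin 2), i)) = fun i => θ * x (1, i) := funext hx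
  simp only [Fin.sum_univ_two, h0, dot_scale_left, dot_scale_right,
    Matrix.cons_val_zero, Matrix.cons_val_one, Matrix.head_cons, star_one]
  ring

lemma kron_form_inf {n : ℕ} (A : Matrix (Fin 2) (Fin 2) ℂ) (U : Matrix (Fin n) (Fin n) ℂ)
    (x : Fin 2 × Fin n → ℂ) (hx : ∀ i, x (1, i) = 0) :
    star x ⬝ᵥ (A ⊗ₖ U) *ᵥ x
      = A 0 0 * ((star fun i => x (0, i)) ⬝ᵥ U *ᵥ (fun i => x (0, i))) := by
  rw [kron_form]
  have h1 : (fun i => x ((1 : Fin 2), i)) = fun _ => (0:ℂ) := funext hx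
  simp only [Fin.sum_univ_two, h1, dot_zero_left, dot_zero_right, mul_zero, add_zero]
lemma conj_form {a b : Type*} [Fintype a] [Fintype b] (P : Matrix a b ℂ)
    (M : Matrix a a ℂ) (w w' : b → ℂ) :
    star w ⬝ᵥ (Pᴴ * M * P) *ᵥ w' = star (P *ᵥ w) ⬝ᵥ M *ᵥ (P *ᵥ w') := by
  rw [← Matrix.mulVec_mulVec, ← Matrix.mulVec_mulVec, Matrix.dotProduct_mulVec (star w) Pᴴ,
    ← Matrix.star_mulVec]


lemma backward_core {n : ℕ} (φ α β γ : ℝ)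
    (hαβγ : (0 ≤ α ∧ α ≤ γ) ∨ (α < 0 ∧ 0 < γ))
    (T : Matrix (Fin 2) (Fin 2) ℂ) (hT : IsUnit T)
    (Δ Sig : Matrix (Fin 2) (Fin 2) ℂ)
    (hΔ : Δ = Tᴴ * Delta0 φ * T) (hSig : Sig = Tᴴ * Sigma0 φ α β γ * T)
    (y : Fin n → Fin 2 → ℂ)
    (hYD : ∀ i j, star (y i) ⬝ᵥ Δ *ᵥ (y j) = 0)
    (hYS : ∀ i, 0 ≤ (star (y i) ⬝ᵥ Sig *ᵥ (y i)).re) :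
    (∃ θ : ℂ, rho θ Δ = 0 ∧ 0 ≤ rho θ Sig ∧ ∀ i, y i 0 = θ * y i 1) ∨
      (Δ 0 0 = 0 ∧ 0 ≤ (Sig 0 0).re ∧ ∀ i, y i 1 = 0) := by
  have hdet := (Matrix.isUnit_iff_isUnit_det T).1 hT
  set u : Fin n → ℂ := fun i => (T *ᵥ y i) 0 with hu
  set v : Fin n → ℂ := fun i => (T *ᵥ y i) 1 with hv
  have hD : ∀ i j, Complex.exp ((φ:ℂ) * Complex.I) * (star (u i) * v j)
      + Complex.exp (-(φ:ℂ) * Complex.I) * (star (v i) * u j) = 0 := by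
    intro i j
    have h := hYD i j
    rw [hΔ, conj_form, delta0_form] at h
    exact h
  have hS : ∀ i, 0 ≤ α * normSq (u i) + γ * normSq (v i) := by
    intro i
    have hval : star (y i) ⬝ᵥ Sig *ᵥ (y i)
        = ((α * normSq (u i) + γ * normSq (v i) : ℝ) : ℂ) := by
      rw [hSig, conj_form, sigma0_form]
      push_cast
      rw [show ((normSq (u i) : ℝ) : ℂ) = star (u i) * u i from
          Complex.normSq_eq_conj_mul_self,
        show ((normSq (v i) : ℝ) : ℂ) = star (v i) * v i from
          Complex.normSq_eq_conj_mul_self]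
      linear_combination (β : ℂ) * hD i i
    have h := hYS i
    rw [hval, Complex.ofReal_re] at h
    exact h
  have key : ∃ p₁ p₂ : ℂ, ¬(p₁ = 0 ∧ p₂ = 0) ∧
      (Complex.exp ((φ:ℂ) * Complex.I) * (star p₁ * p₂)
        + Complex.exp (-(φ:ℂ) * Complex.I) * (star p₂ * p₁) = 0) ∧
      0 ≤ α * normSq p₁ + γ * normSq p₂ ∧
      ∃ s : Fin n → ℂ, ∀ i, u i = s i * p₁ ∧ v i = s i * p₂ := by
    by_cases hu0 : ∀ i, u i = 0
    · by_cases hv0 : ∀ i, v i = 0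
      · rcases hαβγ with ⟨hα, _⟩ | ⟨_, hγ⟩
        · exact ⟨1, 0, by simp, by simp, by simpa using hα,
            fun _ => 0, fun i => by simp [hu0 i, hv0 i]⟩
        · exact ⟨0, 1, by simp, by simp, by simpa using hγ.le,
            fun _ => 0, fun i => by simp [hu0 i, hv0 i]⟩
      · push_neg at hv0
        obtain ⟨i₀, hvi₀⟩ := hv0
        refine ⟨0, 1, by simp, by simp, ?_, v, fun i => by simp [hu0 i]⟩
        have h := hS i₀
        rw [hu0 i₀, normSq_zero, mul_zero, zero_add] at h
        have hpos : 0 < normSq (v i₀) := Complex.normSq_pos.mpr hvi₀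
        have hγ : 0 ≤ γ := by nlinarith
        simpa using hγ
    · push_neg at hu0
      obtain ⟨i₀, hui₀⟩ := hu0
      have hpar : ∀ j, v j * u i₀ = v i₀ * u j := by
        intro j
        have h1 := hD i₀ j
        have h2 := hD i₀ i₀
        have h3 : Complex.exp ((φ:ℂ) * Complex.I) * star (u i₀)
            * (v j * u i₀ - v i₀ * u j) = 0 := by
          linear_combination u i₀ * h1 - u j * h2
        have h4 : star (u i₀) ≠ 0 := by
          simpa using hui₀
        have h5 := mul_eq_zero.1 h3
        rcases h5 with h5 | h5
        · rcases mul_eq_zero.1 h5 with h6 | h6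
          · exact absurd h6 (Complex.exp_ne_zero _)
          · exact absurd h6 h4
        · exact sub_eq_zero.1 h5
      refine ⟨u i₀, v i₀, fun h => hui₀ h.1, hD i₀ i₀, hS i₀,
        fun i => u i / u i₀, fun i => ⟨by field_simp, ?_⟩⟩
      rw [div_mul_eq_mul_div, mul_comm, ← hpar i, mul_div_assoc,
        div_self hui₀, mul_one]
  obtain ⟨p₁, p₂, hp, hpΔ, hpS, s, hs⟩ := key
  set q : Fin 2 → ℂ := T⁻¹ *ᵥ ![p₁, p₂] with hqdef
  have hTq : T *ᵥ q = ![p₁, p₂] := by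
    rw [hqdef, Matrix.mulVec_mulVec, Matrix.mul_nonsing_inv _ hdet, Matrix.one_mulVec]
  have hyq : ∀ i, y i = s i • q := by
    intro i
    have h1 : T *ᵥ y i = s i • (T *ᵥ q) := by
      rw [hTq]
      funext k
      fin_cases k
      · simpa [hu] using (hs i).1
      · simpa [hv] using (hs i).2
    calc y i = (T⁻¹ * T) *ᵥ y i := by rw [Matrix.nonsing_inv_mul _ hdet, Matrix.one_mulVec]
      _ = T⁻¹ *ᵥ (T *ᵥ y i) := (Matrix.mulVec_mulVec _ _ _).symm
      _ = T⁻¹ *ᵥ (s i • (T *ᵥ q)) := by rw [h1]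
      _ = s i • (T⁻¹ *ᵥ (T *ᵥ q)) := Matrix.mulVec_smul _ _ _
      _ = s i • q := by
          rw [Matrix.mulVec_mulVec, Matrix.nonsing_inv_mul _ hdet, Matrix.one_mulVec]
  have hqΔ : star q ⬝ᵥ Δ *ᵥ q = 0 := by
    rw [hΔ, conj_form, hTq, delta0_form]
    simpa using hpΔ
  have hqS : star q ⬝ᵥ Sig *ᵥ q = ((α * normSq p₁ + γ * normSq p₂ : ℝ) : ℂ) := by
    rw [hSig, conj_form, hTq, sigma0_form]
    simp only [Matrix.cons_val_zero, Matrix.cons_val_one, Matrix.head_cons]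
    push_cast
    rw [show ((normSq p₁ : ℝ) : ℂ) = star p₁ * p₁ from Complex.normSq_eq_conj_mul_self,
      show ((normSq p₂ : ℝ) : ℂ) = star p₂ * p₂ from Complex.normSq_eq_conj_mul_self]
    linear_combination (β : ℂ) * hpΔ
  by_cases hq1 : q 1 = 0
  · right
    have hq0 : q 0 ≠ 0 := by
      intro h0
      apply hp
      have hq : q = 0 := by
        funext k; fin_cases k
        · exact h0
        · exact hq1
      have hpv : (![p₁, p₂] : Fin 2 → ℂ) = 0 := by
        rw [← hTq, hq, Matrix.mulVec_zero]
      exact ⟨by simpa using congrFun hpv 0, by simpa using congrFun hpv 1⟩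
    have he : (![(1:ℂ), 0] : Fin 2 → ℂ) = (q 0)⁻¹ • q := by
      funext k; fin_cases k
      · simp [inv_mul_cancel₀ hq0]
      · simp [hq1]
    have h00Δ : Δ 0 0 = star (![(1:ℂ), 0]) ⬝ᵥ Δ *ᵥ ![(1:ℂ), 0] := by
      rw [form2]; simp
    have h00S : Sig 0 0 = star (![(1:ℂ), 0]) ⬝ᵥ Sig *ᵥ ![(1:ℂ), 0] := by
      rw [form2]; simp
    refine ⟨?_, ?_, fun i => ?_⟩
    · rw [h00Δ, he, form_scale, hqΔ, mul_zero]
    · rw [h00S, he, form_scale, hqS, ← Complex.ofReal_mul, Complex.ofReal_re]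
      exact mul_nonneg (normSq_nonneg _) hpS
    · rw [hyq i]; simp [hq1]
  · left
    have he : (![q 0 / q 1, (1:ℂ)] : Fin 2 → ℂ) = (q 1)⁻¹ • q := by
      funext k; fin_cases k
      · simp [div_eq_inv_mul]
      · simp [inv_mul_cancel₀ hq1]
    refine ⟨q 0 / q 1, ?_, ?_, fun i => ?_⟩
    · show (star ![q 0 / q 1, (1:ℂ)] ⬝ᵥ Δ *ᵥ ![q 0 / q 1, 1]).re = 0
      rw [he, form_scale, hqΔ, mul_zero]; simp
    · show 0 ≤ (star ![q 0 / q 1, (1:ℂ)] ⬝ᵥ Sig *ᵥ ![q 0 / q 1, 1]).re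
      rw [he, form_scale, hqS, ← Complex.ofReal_mul, Complex.ofReal_re]
      exact mul_nonneg (normSq_nonneg _) hpS
    · rw [hyq i]
      simp only [Pi.smul_apply, smul_eq_mul]
      field_simp

lemma kron_neg {n : ℕ} (A : Matrix (Fin 2) (Fin 2) ℂ) (U : Matrix (Fin n) (Fin n) ℂ) :
    A ⊗ₖ (-U) = -(A ⊗ₖ U) := by
  ext ⟨p, i⟩ ⟨q, j⟩
  simp [Matrix.kroneckerMap_apply, Matrix.neg_apply, mul_neg]

/-- Rank-one characterization of the frequency set via the multiplier cone
(pointwise form of Lemma 10). -/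
theorem rank_one_frequency_characterization {n m : ℕ} (hn : 1 ≤ n) (hm : 1 ≤ m)
    (ν φ : ℝ) (hν : 0 < ν) (hν2 : ν < 2) (hφ : φ = (Real.pi / 2) * (ν - 1))
    (α β γ : ℝ) (hαβγ : (0 ≤ α ∧ α ≤ γ) ∨ (α < 0 ∧ 0 < γ))
    (T : Matrix (Fin 2) (Fin 2) ℂ) (hT : IsUnit T)
    (Δ Sig : Matrix (Fin 2) (Fin 2) ℂ)
    (hΔ : Δ = Tᴴ * Delta0 φ * T) (hSig : Sig = Tᴴ * Sigma0 φ α β γ * T)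
    (N : Matrix (Fin 2 × Fin n) (Fin (n + m)) ℂ)
    (η : Fin (n + m) → ℂ) (hη : η ≠ 0) :
    ((∃ θ : ℂ, rho θ Δ = 0 ∧ 0 ≤ rho θ Sig ∧
        ∀ i : Fin n, (N *ᵥ η) (0, i) = θ * (N *ᵥ η) (1, i)) ∨
      (Δ 0 0 = 0 ∧ 0 ≤ (Sig 0 0).re ∧ ∀ i : Fin n, (N *ᵥ η) (1, i) = 0)) ↔
    (∀ U V : Matrix (Fin n) (Fin n) ℂ, U.IsHermitian → V.IsHermitian → V.PosSemidef →
      0 ≤ (star η ⬝ᵥ (Nᴴ * (Δ ⊗ₖ U + Sig ⊗ₖ V) * N) *ᵥ η).re) := by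
  have hΔh : Δ.IsHermitian := hΔ ▸ Matrix.isHermitian_conjTranspose_mul_mul T (delta0_herm φ)
  have hSh : Sig.IsHermitian :=
    hSig ▸ Matrix.isHermitian_conjTranspose_mul_mul T (sigma0_herm φ α β γ)
  set x : Fin 2 × Fin n → ℂ := N *ᵥ η with hx
  have hsplit : ∀ U V : Matrix (Fin n) (Fin n) ℂ,
      star x ⬝ᵥ (Δ ⊗ₖ U + Sig ⊗ₖ V) *ᵥ x
        = star x ⬝ᵥ (Δ ⊗ₖ U) *ᵥ x + star x ⬝ᵥ (Sig ⊗ₖ V) *ᵥ x := fun U V => by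
    rw [Matrix.add_mulVec, dotProduct_add]
  constructor
  · rintro (⟨θ, hρΔ, hρS, hab⟩ | ⟨hΔ00, hS00, hb⟩) U V hU hV hVpsd
    · rw [form_transfer, ← hx, hsplit, kron_form_prop Δ U x θ hab, kron_form_prop Sig V x θ hab]
      have hκΔ : star ![θ, 1] ⬝ᵥ Δ *ᵥ ![θ, 1] = 0 := by
        rw [herm_form_real hΔh]
        have h : (star ![θ, 1] ⬝ᵥ Δ *ᵥ ![θ, 1]).re = 0 := hρΔ
        rw [h, Complex.ofReal_zero]
      have hκS : star ![θ, 1] ⬝ᵥ Sig *ᵥ ![θ, 1] = ((rho θ Sig : ℝ) : ℂ) :=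
        herm_form_real hSh _
      rw [hκΔ, hκS, zero_mul, zero_add, Complex.re_ofReal_mul]
      have hSV := hVpsd.dotProduct_mulVec_nonneg (fun i => x (1, i))
      exact mul_nonneg hρS (by simpa using (Complex.le_def.1 hSV).1)
    · rw [form_transfer, ← hx, hsplit, kron_form_inf Δ U x hb, kron_form_inf Sig V x hb,
        hΔ00, zero_mul, zero_add]
      have hS00' : Sig 0 0 = (((Sig 0 0).re : ℝ) : ℂ) := by
        have h : star (Sig 0 0) = Sig 0 0 := by
          conv_rhs => rw [← hSh.eq]
          rw [Matrix.conjTranspose_apply]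
        exact ((Complex.conj_eq_iff_re).1 h) ▸ rfl
      rw [hS00', Complex.re_ofReal_mul]
      have hSV := hVpsd.dotProduct_mulVec_nonneg (fun i => x (0, i))
      exact mul_nonneg hS00 (by simpa using (Complex.le_def.1 hSV).1)
  · intro h
    have hform : ∀ U V : Matrix (Fin n) (Fin n) ℂ, U.IsHermitian → V.IsHermitian →
        V.PosSemidef → 0 ≤ (star x ⬝ᵥ (Δ ⊗ₖ U) *ᵥ x + star x ⬝ᵥ (Sig ⊗ₖ V) *ᵥ x).re := by
      intro U V hU hV hVp
      have := h U V hU hV hVp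
      rwa [form_transfer, ← hx, hsplit] at this
    set Z : (Fin n → ℂ) → Fin 2 → ℂ := fun s p => ∑ j, star (s j) * x (p, j) with hZdef
    have hkr : ∀ (A : Matrix (Fin 2) (Fin 2) ℂ) (s : Fin n → ℂ),
        star x ⬝ᵥ (A ⊗ₖ vecMulVec s (star s)) *ᵥ x = star (Z s) ⬝ᵥ A *ᵥ (Z s) :=
      fun A s => kron_rank_one A s x
    have hZS : ∀ s, 0 ≤ (star (Z s) ⬝ᵥ Sig *ᵥ (Z s)).re := by
      intro s
      have h0 := hform 0 (vecMulVec s (star s)) Matrix.isHermitian_zero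
        (ro_psd s).1 (ro_psd s)
      rwa [Matrix.kronecker_zero, Matrix.zero_mulVec, dotProduct_zero, zero_add, hkr] at h0
    have hZD : ∀ s, star (Z s) ⬝ᵥ Δ *ᵥ (Z s) = 0 := by
      intro s
      have h1 := hform (vecMulVec s (star s)) 0 (ro_psd s).1
        Matrix.isHermitian_zero Matrix.PosSemidef.zero
      have h2 := hform (-(vecMulVec s (star s))) 0 ((ro_psd s).1.neg)
        Matrix.isHermitian_zero Matrix.PosSemidef.zero
      rw [Matrix.kronecker_zero, Matrix.zero_mulVec, dotProduct_zero, add_zero, hkr] at h1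
      rw [Matrix.kronecker_zero, Matrix.zero_mulVec, dotProduct_zero, add_zero,
        kron_neg, Matrix.neg_mulVec, dotProduct_neg, hkr] at h2
      have hre : (star (Z s) ⬝ᵥ Δ *ᵥ (Z s)).re = 0 := by
        simp only [Complex.neg_re] at h2
        linarith
      rw [herm_form_real hΔh, hre, Complex.ofReal_zero]
    have hZadd : ∀ s t, Z (s + t) = Z s + Z t := by
      intro s t
      funext p
      simp only [hZdef, Pi.add_apply, star_add, add_mul, Finset.sum_add_distrib]
    have hZsmul : ∀ (c : ℂ) (t : Fin n → ℂ), Z (c • t) = star c • Z t := by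
      intro c t
      funext p
      simp only [hZdef, Pi.smul_apply, smul_eq_mul, star_mul', Finset.mul_sum]
      exact Finset.sum_congr rfl fun j _ => by ring
    have hBsym : ∀ s t, star (Z s) ⬝ᵥ Δ *ᵥ (Z t) + star (Z t) ⬝ᵥ Δ *ᵥ (Z s) = 0 := by
      intro s t
      have he := hZD (s + t)
      rw [hZadd] at he
      simp only [star_add, Matrix.mulVec_add, add_dotProduct, dotProduct_add] at he
      have h1 := hZD s
      have h2 := hZD t
      linear_combination he - h1 - h2
    have hB : ∀ s t, star (Z s) ⬝ᵥ Δ *ᵥ (Z t) = 0 := by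
      intro s t
      have e1 := hBsym s t
      have e2 := hBsym s (Complex.I • t)
      rw [hZsmul] at e2
      simp only [Matrix.mulVec_smul, dotProduct_smul, star_smul, smul_dotProduct,
        smul_eq_mul, Complex.star_def, map_neg, Complex.conj_I, Complex.conj_conj,
        neg_neg] at e2
      have e3 : star (Z t) ⬝ᵥ Δ *ᵥ Z s = star (Z s) ⬝ᵥ Δ *ᵥ Z t := by
        have h4 : Complex.I * (star (Z t) ⬝ᵥ Δ *ᵥ Z s - star (Z s) ⬝ᵥ Δ *ᵥ Z t) = 0 := by
          linear_combination e2
        rcases mul_eq_zero.1 h4 with h5 | h5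
        · exact absurd h5 Complex.I_ne_zero
        · exact sub_eq_zero.1 h5
      linear_combination (1/2 : ℂ) * e1 - (1/2 : ℂ) * e3
    have hZsingle : ∀ i : Fin n, Z (Pi.single i 1) = fun p => x (p, i) := by
      intro i
      funext p
      simp only [hZdef]
      rw [Finset.sum_eq_single i]
      · simp
      · intro j _ hj
        simp [Pi.single_apply, hj]
      · simp
    have hYD : ∀ i j : Fin n, star (fun p => x (p, i)) ⬝ᵥ Δ *ᵥ (fun p => x (p, j)) = 0 := by
      intro i j
      have := hB (Pi.single i 1) (Pi.single j 1)
      rwa [hZsingle, hZsingle] at this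
    have hYS : ∀ i : Fin n, 0 ≤ (star (fun p => x (p, i)) ⬝ᵥ Sig *ᵥ (fun p => x (p, i))).re := by
      intro i
      have := hZS (Pi.single i 1)
      rwa [hZsingle] at this
    have := backward_core φ α β γ hαβγ T hT Δ Sig hΔ hSig (fun i p => x (p, i)) hYD hYS
    rcases this with ⟨θ, h1, h2, h3⟩ | ⟨h1, h2, h3⟩
    · exact Or.inl ⟨θ, h1, h2, fun i => h3 i⟩
    · exact Or.inr ⟨h1, h2, fun i => h3 i⟩
end

section
/- Positive-semidefinite outer-product sum characterizes the lower half-plane (Lemma 13): Let f, g ∈ ℂⁿ with g ≠ 0, and let fg* denote the n×n outer-product matrix with entries f_j·conj(g_k). Then fg* + gf* is positive semidefinite if and only if there exists θ ∈ ℂ with Im θ ≤ 0 such that f = iθ·g. -/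
open Matrix Complex
open scoped Matrix Kronecker ComplexOrder

lemma vecMulVec_mulVec' {n : ℕ} (u v x : Fin n → ℂ) :
    Matrix.vecMulVec u v *ᵥ x = (v ⬝ᵥ x) • u := by
  ext i
  simp [Matrix.vecMulVec, mulVec, dotProduct, Finset.mul_sum, mul_assoc, mul_comm,
    mul_left_comm, smul_eq_mul]

lemma form_eval {n : ℕ} (f g x : Fin n → ℂ) :
    star x ⬝ᵥ ((Matrix.vecMulVec f (star g) + Matrix.vecMulVec g (star f)) *ᵥ x) =
      (star g ⬝ᵥ x) * star (star f ⬝ᵥ x) + (star f ⬝ᵥ x) * star (star g ⬝ᵥ x) := by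
  rw [add_mulVec, dotProduct_add, vecMulVec_mulVec', vecMulVec_mulVec',
    dotProduct_smul, dotProduct_smul, star_dotProduct x f, star_dotProduct x g]
  simp [smul_eq_mul]

lemma herm_outer {n : ℕ} (f g : Fin n → ℂ) :
    (Matrix.vecMulVec f (star g) + Matrix.vecMulVec g (star f)).IsHermitian := by
  have h : ∀ u v : Fin n → ℂ, (Matrix.vecMulVec u (star v))ᴴ = Matrix.vecMulVec v (star u) := by
    intro u v
    ext i j
    simp [Matrix.conjTranspose_apply, Matrix.vecMulVec_apply, mul_comm]
  unfold Matrix.IsHermitian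
  rw [conjTranspose_add, h, h, add_comm]

/-- Positive-semidefinite outer-product sum characterizes the lower half-plane (Lemma 13). -/
theorem outer_product_sum_psd_iff_lower_half_plane {n : ℕ}
    (f g : Fin n → ℂ) (hg : g ≠ 0) :
    (Matrix.vecMulVec f (star g) + Matrix.vecMulVec g (star f)).PosSemidef ↔
    ∃ θ : ℂ, θ.im ≤ 0 ∧ f = (Complex.I * θ) • g := by
  rw [Matrix.posSemidef_iff_dotProduct_mulVec]
  constructor
  · rintro ⟨-, hq⟩
    have key : ∀ x : Fin n → ℂ, 0 ≤ ((star g ⬝ᵥ x) * star (star f ⬝ᵥ x)).re := by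
      intro x
      have h := hq x
      rw [form_eval] at h
      rw [Complex.le_def] at h
      have h2 := h.1
      simp only [Complex.zero_re, Complex.add_re] at h2
      have h3 : ((star f ⬝ᵥ x) * star (star g ⬝ᵥ x)).re
          = ((star g ⬝ᵥ x) * star (star f ⬝ᵥ x)).re := by
        have : (star f ⬝ᵥ x) * star (star g ⬝ᵥ x) = star ((star g ⬝ᵥ x) * star (star f ⬝ᵥ x)) := by
          simp [mul_comm]
        rw [this, Complex.star_def, Complex.conj_re]
      linarith
    set G : ℂ := star g ⬝ᵥ g with hG
    have hGpos : 0 < G := Matrix.dotProduct_star_self_pos_iff.mpr hg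
    have hGre : 0 < G.re := by rw [Complex.lt_def] at hGpos; exact hGpos.1
    have hGim : G.im = 0 := by rw [Complex.lt_def] at hGpos; exact hGpos.2.symm
    have hG0 : G ≠ 0 := by intro h; rw [h] at hGre; simp at hGre
    set μ : ℂ := (star g ⬝ᵥ f) / G with hμ
    set f' : Fin n → ℂ := f - μ • g with hf'
    have horth : star g ⬝ᵥ f' = 0 := by
      rw [hf', dotProduct_sub, dotProduct_smul, smul_eq_mul, hμ, div_mul_cancel₀ _ hG0, sub_self]
    have hfeq : f = f' + μ • g := by simp [hf']
    have hf'0 : f' = 0 := by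
      by_contra hne
      set F : ℂ := star f' ⬝ᵥ f' with hF
      have hFpos : 0 < F := Matrix.dotProduct_star_self_pos_iff.mpr hne
      have hFre : 0 < F.re := by rw [Complex.lt_def] at hFpos; exact hFpos.1
      have hFim : F.im = 0 := by rw [Complex.lt_def] at hFpos; exact hFpos.2.symm
      have hFstar : star F = F := by
        apply Complex.ext <;> simp [Complex.star_def, hFim]
      set d : ℂ := star f ⬝ᵥ g with hd
      set t : ℝ := -(F.re / (2 * (|d.re| + 1))) with ht
      have htneg : t < 0 := by
        rw [ht, neg_lt_zero]
        positivity
      set x : Fin n → ℂ := f' + (t : ℂ) • g with hx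
      have ha : star g ⬝ᵥ x = (t : ℂ) * G := by
        rw [hx, dotProduct_add, horth, dotProduct_smul, smul_eq_mul, zero_add]
      have hff' : star f ⬝ᵥ f' = F := by
        have h1 : star f' ⬝ᵥ g = 0 := by
          rw [star_dotProduct f' g, horth, star_zero]
        have h2 : star f' ⬝ᵥ f = F := by
          rw [hfeq, dotProduct_add, dotProduct_smul, smul_eq_mul, h1, mul_zero, add_zero, hF]
        rw [star_dotProduct f f', h2, hFstar]
      have hb : star f ⬝ᵥ x = F + (t : ℂ) * d := by
        rw [hx, dotProduct_add, hff', dotProduct_smul, smul_eq_mul, hd]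
      have hk := key x
      rw [ha, hb] at hk
      have hre : (((t : ℂ) * G) * star (F + (t : ℂ) * d)).re
          = t * G.re * (F.re + t * d.re) := by
        simp [Complex.star_def, Complex.mul_re, Complex.mul_im, Complex.add_re,
          Complex.add_im, Complex.conj_re, Complex.conj_im, hGim, hFim]
      rw [hre] at hk
      set s : ℝ := 2 * (|d.re| + 1) with hs
      have hspos : 0 < s := by rw [hs]; positivity
      have hts : t * s = -F.re := by
        rw [ht, hs]
        field_simp
      have h5 : t * d.re * s = -F.re * d.re := by
        rw [mul_right_comm, hts]
      have h6 : 0 < s - d.re := by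
        have := le_abs_self d.re
        rw [hs]; linarith
      have hpos2 : 0 < F.re + t * d.re := by
        nlinarith [h5, mul_pos hFre h6, hspos]
      nlinarith [mul_pos (mul_pos (neg_pos.mpr htneg) hGre) hpos2]
    have hfmu : f = μ • g := by
      rw [hfeq, hf'0, zero_add]
    have hμre : 0 ≤ μ.re := by
      have hk := key g
      have hbg : star f ⬝ᵥ g = star μ * G := by
        rw [hfmu]
        have : star (μ • g) = star μ • star g := by
          ext i; simp [Pi.smul_apply, smul_eq_mul]
        rw [this, smul_dotProduct, smul_eq_mul, hG]
      rw [hbg] at hk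
      have : (G * star (star μ * G)).re = μ.re * (G.re * G.re) := by
        simp [Complex.star_def, Complex.mul_re, Complex.mul_im, Complex.conj_re,
          Complex.conj_im, hGim]
        ring
      rw [hG] at hk
      rw [this] at hk
      nlinarith [mul_pos hGre hGre]
    refine ⟨-Complex.I * μ, ?_, ?_⟩
    · have him : (-Complex.I * μ).im = -μ.re := by
        simp [Complex.mul_im, Complex.neg_im, Complex.neg_re, Complex.I_re, Complex.I_im]
      rw [him]; linarith
    · rw [hfmu]
      congr 1
      rw [← mul_assoc]
      simp [Complex.I_mul_I]
  · rintro ⟨θ, hθ, rfl⟩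
    refine ⟨herm_outer _ _, fun x => ?_⟩
    rw [form_eval]
    have ha : star ((Complex.I * θ) • g) ⬝ᵥ x = star (Complex.I * θ) * (star g ⬝ᵥ x) := by
      have : star ((Complex.I * θ) • g) = star (Complex.I * θ) • star g := by
        ext i; simp [Pi.smul_apply, smul_eq_mul]
      rw [this, smul_dotProduct, smul_eq_mul]
    rw [ha]
    set a : ℂ := star g ⬝ᵥ x with hA
    set c : ℂ := Complex.I * θ with hc
    have h1 : c + star c = ((-2 * θ.im : ℝ) : ℂ) := by
      rw [hc]
      apply Complex.ext <;>
        simp [Complex.star_def, Complex.mul_re, Complex.mul_im, Complex.I_re, Complex.I_im] <;>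
        ring
    have this1 : a * star (star c * a) + star c * a * star a
        = ((-2 * θ.im : ℝ) : ℂ) * (a * star a) := by
      rw [star_mul', star_star, ← h1]
      ring
    rw [this1]
    have h2 : a * star a = ((Complex.normSq a : ℝ) : ℂ) := by
      rw [Complex.star_def, Complex.mul_conj]
    rw [h2, ← Complex.ofReal_mul, Complex.zero_le_real]
    have h3 : 0 ≤ -2 * θ.im := by linarith
    exact mul_nonneg h3 (Complex.normSq_nonneg a)
end

section
/- Kernel/quadratic-form equivalence for the lower half-plane, order 1 < ν < 2 (Lemma 15 of the paper, with the half-plane region certified by its proof): Let 1 < ν < 2 and s = sin(πν/2) > 0. Let f, g ∈ ℂⁿ and set ζ = (f, i·g) ∈ ℂ^{2n}. Then the following are equivalent. (i) Either g = 0, or there exists θ ∈ ℂ with Im θ ≤ 0 such that f = iθ·g. (ii) For every Hermitian positive definite U ∈ ℂ^{n×n}, the (real) Hermitian-form value ζ*(([[0, −2is],[2is, 0]]) ⊗ U)ζ = 2s·(f*Ug + g*Uf) is ≥ 0. -/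
open Matrix Complex
open scoped Matrix Kronecker ComplexOrder

section Aux
lemma aux_quad_eq {n : ℕ} (s : ℝ) (f g : Fin n → ℂ) (U : Matrix (Fin n) (Fin n) ℂ) :
    (star (fun q : Fin 2 × Fin n => ![f, fun k => Complex.I * g k] q.1 q.2) ⬝ᵥ
      ((!![0, -(((2 * s : ℝ) : ℂ) * Complex.I);
          ((2 * s : ℝ) : ℂ) * Complex.I, 0]) ⊗ₖ U) *ᵥ
      (fun q : Fin 2 × Fin n => ![f, fun k => Complex.I * g k] q.1 q.2))
    = ((2 * s : ℝ) : ℂ) * (star f ⬝ᵥ U *ᵥ g + star g ⬝ᵥ U *ᵥ f) := by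
  simp only [dotProduct, mulVec, Pi.star_apply, Fintype.sum_prod_type,
    Fin.sum_univ_two, Matrix.kroneckerMap_apply, Matrix.cons_val_zero,
    Matrix.cons_val_one, Matrix.head_cons, Matrix.cons_val', Matrix.of_apply,
    Matrix.empty_val', Matrix.cons_val_fin_one, Matrix.head_fin_const,
    zero_mul, mul_zero, Finset.sum_const_zero, zero_add, add_zero,
    Complex.star_def, _root_.map_mul, Complex.conj_I, Finset.mul_sum, mul_add]
  rw [← Finset.sum_add_distrib, ← Finset.sum_add_distrib]
  refine Finset.sum_congr rfl fun x _ => ?_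
  rw [← Finset.sum_add_distrib, ← Finset.sum_add_distrib]
  refine Finset.sum_congr rfl fun y _ => ?_
  ring_nf
  rw [Complex.I_sq]
  ring

lemma aux_vecMulVec_mulVec {n : ℕ} (a b y : Fin n → ℂ) :
    Matrix.vecMulVec a b *ᵥ y = (b ⬝ᵥ y) • a := by
  funext i
  simp only [Matrix.vecMulVec_apply, mulVec, dotProduct, Pi.smul_apply, smul_eq_mul,
    Finset.sum_mul]
  refine Finset.sum_congr rfl fun x _ => by ring

lemma aux_conj_quad {n : ℕ} (U : Matrix (Fin n) (Fin n) ℂ) (hU : U.IsHermitian)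
    (f g : Fin n → ℂ) :
    star g ⬝ᵥ U *ᵥ f = starRingEnd ℂ (star f ⬝ᵥ U *ᵥ g) := by
  have h1 : star g ⬝ᵥ U *ᵥ f = star (star (U *ᵥ f) ⬝ᵥ g) := Matrix.star_dotProduct _ _
  rw [h1, Matrix.star_mulVec, hU.eq, ← Matrix.dotProduct_mulVec]
  rfl

lemma aux_posdef {n : ℕ} (t : ℝ) (ht : 0 < t) (w : Fin n → ℂ) :
    (((t : ℂ) • (1 : Matrix (Fin n) (Fin n) ℂ)) + Matrix.vecMulVec w (star w)).PosDef := by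
  rw [Matrix.posDef_iff_dotProduct_mulVec]
  constructor
  · apply Matrix.IsHermitian.add
    · simp [Matrix.IsHermitian, Matrix.conjTranspose_smul, Complex.conj_ofReal]
    · ext i j
      simp [Matrix.conjTranspose_apply, Matrix.vecMulVec_apply, mul_comm]
  · intro x hx
    rw [Matrix.add_mulVec, Matrix.smul_mulVec, Matrix.one_mulVec,
      aux_vecMulVec_mulVec, dotProduct_add, dotProduct_smul,
      dotProduct_smul]
    have h1 : star x ⬝ᵥ w = starRingEnd ℂ (star w ⬝ᵥ x) := by
      rw [Matrix.star_dotProduct]; rfl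
    rw [h1]
    set z := star w ⬝ᵥ x
    have h2 : z • starRingEnd ℂ z = (Complex.normSq z : ℂ) := by
      rw [smul_eq_mul, Complex.mul_conj]
    rw [h2]
    have h3 : (0 : ℂ) < star x ⬝ᵥ x := by
      refine lt_of_le_of_ne (dotProduct_star_self_nonneg x) ?_
      exact fun hc => hx (dotProduct_star_self_eq_zero.mp hc.symm)
    rw [Complex.lt_def] at h3 ⊢
    obtain ⟨h3re, h3im⟩ := h3
    constructor
    · simp only [Complex.add_re, Complex.zero_re, Complex.ofReal_re, smul_eq_mul,
        Complex.mul_re, Complex.ofReal_im, ← h3im]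
      simp only [Complex.zero_re, Complex.zero_im] at h3re h3im
      nlinarith [Complex.normSq_nonneg z]
    · simp only [Complex.add_im, Complex.zero_im, Complex.ofReal_im, smul_eq_mul,
        Complex.mul_im, Complex.ofReal_re, ← h3im]
      simp only [Complex.zero_im] at h3im
      simp [← h3im]
end Aux


/-- Kernel/quadratic-form equivalence for the lower half-plane, order 1 < ν < 2 (Lemma 15). -/
theorem kernel_quadratic_form_lower_half_plane {n : ℕ} (ν s : ℝ)
    (hν : 1 < ν) (hν2 : ν < 2) (hs : s = Real.sin (Real.pi * ν / 2)) (hspos : 0 < s)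
    (f g : Fin n → ℂ) (ζ : Fin 2 × Fin n → ℂ)
    (hζ : ζ = fun q => ![f, fun k => Complex.I * g k] q.1 q.2) :
    (g = 0 ∨ ∃ θ : ℂ, θ.im ≤ 0 ∧ f = (Complex.I * θ) • g) ↔
    (∀ U : Matrix (Fin n) (Fin n) ℂ, U.IsHermitian → U.PosDef →
      0 ≤ (star ζ ⬝ᵥ
        ((!![0, -(((2 * s : ℝ) : ℂ) * Complex.I);
            ((2 * s : ℝ) : ℂ) * Complex.I, 0]) ⊗ₖ U) *ᵥ ζ).re) := by
  subst hζ
  constructor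
  · rintro (hg | ⟨θ, hθ, hf⟩) U hU hPD
    · rw [aux_quad_eq, hg]
      simp
    · rw [aux_quad_eq, hf]
      have hQ := hPD.posSemidef.dotProduct_mulVec_nonneg g
      set Q := star g ⬝ᵥ U *ᵥ g with hQdef
      rw [Complex.le_def] at hQ
      obtain ⟨hQre, hQim⟩ := hQ
      simp only [Complex.zero_re, Complex.zero_im] at hQre hQim
      have e1 : star ((Complex.I * θ) • g) ⬝ᵥ U *ᵥ g
          = starRingEnd ℂ (Complex.I * θ) * Q := by
        rw [star_smul, smul_dotProduct]
        rfl
      have e2 : star g ⬝ᵥ U *ᵥ ((Complex.I * θ) • g) = (Complex.I * θ) * Q := by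
        rw [Matrix.mulVec_smul, dotProduct_smul]
        rfl
      rw [e1, e2]
      have e3 : starRingEnd ℂ (Complex.I * θ) * Q + (Complex.I * θ) * Q
          = ((2 * (Complex.I * θ).re : ℝ) : ℂ) * Q := by
        rw [← Complex.add_conj]
        ring
      rw [e3, show ((2 * s : ℝ) : ℂ) * (((2 * (Complex.I * θ).re : ℝ) : ℂ) * Q)
        = (((2 * s) * (2 * (Complex.I * θ).re) : ℝ) : ℂ) * Q by push_cast; ring,
        Complex.re_ofReal_mul]
      have h4 : (Complex.I * θ).re = -θ.im := by simp
      rw [h4]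
      nlinarith [mul_nonneg (mul_nonneg hspos.le (by linarith : (0:ℝ) ≤ 2 * -θ.im)) hQre]
  · intro hQall
    by_contra hcon
    push_neg at hcon
    obtain ⟨hg0, hθall⟩ := hcon
    have key : ∀ U : Matrix (Fin n) (Fin n) ℂ, U.IsHermitian → U.PosDef →
        0 ≤ (star f ⬝ᵥ U *ᵥ g).re := by
      intro U hU hPD
      have h0 := hQall U hU hPD
      rw [aux_quad_eq, aux_conj_quad U hU f g] at h0
      set z := star f ⬝ᵥ U *ᵥ g
      rw [Complex.add_conj, ← Complex.ofReal_mul, Complex.ofReal_re] at h0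
      nlinarith
    -- now derive a contradiction
    have hGpos : (0 : ℂ) < star g ⬝ᵥ g := by
      refine lt_of_le_of_ne (dotProduct_star_self_nonneg g) ?_
      exact fun hc => hg0 (dotProduct_star_self_eq_zero.mp hc.symm)
    set G := star g ⬝ᵥ g with hGdef
    rw [Complex.lt_def] at hGpos
    obtain ⟨hGre, hGim⟩ := hGpos
    simp only [Complex.zero_re, Complex.zero_im] at hGre hGim
    by_cases hmul : ∃ c : ℂ, f = c • g
    · obtain ⟨c, hc⟩ := hmul
      -- then Re c < 0 would follow from key with U = 1; but also Re c ≥ 0 leads to θ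
      have hre : ¬ (0 ≤ c.re) := by
        intro hcre
        refine hθall (-(Complex.I * c)) (by simp [hcre]) ?_
        have hic : Complex.I * -(Complex.I * c) = c := by
          rw [mul_neg, ← mul_assoc, Complex.I_mul_I]
          ring
        rw [hc, hic]
      have h1 : (1 : Matrix (Fin n) (Fin n) ℂ).PosDef := by
        have h2 := aux_posdef (n := n) 1 one_pos 0
        have h3 : ((1 : ℝ) : ℂ) • (1 : Matrix (Fin n) (Fin n) ℂ)
            + Matrix.vecMulVec (0 : Fin n → ℂ) (star (0 : Fin n → ℂ)) = 1 := by
          ext i j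
          simp [Matrix.vecMulVec_apply]
        rwa [h3] at h2
      have h2 := key 1 Matrix.isHermitian_one h1
      rw [Matrix.one_mulVec, hc, star_smul, smul_dotProduct] at h2
      have h3 : (star c • (star g ⬝ᵥ g)).re = c.re * G.re := by
        rw [smul_eq_mul, ← hGdef, Complex.star_def, Complex.mul_re]
        simp [← hGim, Complex.conj_re]
      rw [h3] at h2
      exact hre (by nlinarith)
    · -- f is not a multiple of g
      push_neg at hmul
      set c : ℂ := (star g ⬝ᵥ f) / G with hcdef
      set h : Fin n → ℂ := f - c • g with hhdef
      have hGne : G ≠ 0 := fun hc => by simp [hc] at hGre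
      have horth : star g ⬝ᵥ h = 0 := by
        rw [hhdef, dotProduct_sub, dotProduct_smul, smul_eq_mul,
          ← hGdef, hcdef, div_mul_cancel₀ _ hGne, sub_self]
      have horth' : star h ⬝ᵥ g = 0 := by
        rw [Matrix.star_dotProduct, horth, star_zero]
      have hh0 : h ≠ 0 := by
        intro hzero
        apply hmul c
        have h5 : f - c • g = 0 := by rw [← hhdef]; exact hzero
        exact sub_eq_zero.mp h5
      have hHpos : (0 : ℂ) < star h ⬝ᵥ h := by
        refine lt_of_le_of_ne (dotProduct_star_self_nonneg h) ?_
        exact fun hc => hh0 (dotProduct_star_self_eq_zero.mp hc.symm)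
      set H := star h ⬝ᵥ h with hHdef
      rw [Complex.lt_def] at hHpos
      obtain ⟨hHre, hHim⟩ := hHpos
      simp only [Complex.zero_re, Complex.zero_im] at hHre hHim
      set r : ℝ := H.re / (1 + |c.re| * (1 + G.re)) with hrdef
      have hden : 0 < 1 + |c.re| * (1 + G.re) := by positivity
      have hrpos : 0 < r := div_pos hHre hden
      set w : Fin n → ℂ := h - (r : ℂ) • g with hwdef
      set U : Matrix (Fin n) (Fin n) ℂ :=
        ((r ^ 2 : ℝ) : ℂ) • 1 + Matrix.vecMulVec w (star w) with hUdef
      have hUpd : U.PosDef := aux_posdef (r ^ 2) (by positivity) w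
      have hUherm : U.IsHermitian := hUpd.1
      have h0 := key U hUherm hUpd
      -- compute star f ⬝ᵥ U *ᵥ g
      have hfd : f = h + c • g := by rw [hhdef]; abel
      have e4 : star w ⬝ᵥ g = -(r : ℂ) * G := by
        rw [hwdef, star_sub, star_smul, sub_dotProduct, smul_dotProduct,
          horth', ← hGdef]
        simp [Complex.conj_ofReal]
      have e3 : star f ⬝ᵥ g = starRingEnd ℂ c * G := by
        rw [hfd, star_add, star_smul, add_dotProduct, smul_dotProduct,
          horth', ← hGdef]
        simp
      have e6 : star h ⬝ᵥ f = H := by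
        rw [hfd, dotProduct_add, dotProduct_smul, horth', ← hHdef]
        simp
      have e7 : star f ⬝ᵥ h = H := by
        rw [Matrix.star_dotProduct, e6, Complex.star_def]
        exact Complex.conj_eq_iff_im.mpr hHim.symm
      have e5 : star f ⬝ᵥ w = H - (r : ℂ) * (starRingEnd ℂ c) * G := by
        rw [hwdef, dotProduct_sub, dotProduct_smul, e7, e3, smul_eq_mul]
        ring
      have hUg : U *ᵥ g = ((r ^ 2 : ℝ) : ℂ) • g + (star w ⬝ᵥ g) • w := by
        rw [hUdef, Matrix.add_mulVec, Matrix.smul_mulVec, Matrix.one_mulVec,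
          aux_vecMulVec_mulVec]
      have hval : star f ⬝ᵥ U *ᵥ g
          = ((r ^ 2 : ℝ) : ℂ) * (starRingEnd ℂ c * G)
            + (-(r : ℂ) * G) * (H - (r : ℂ) * (starRingEnd ℂ c) * G) := by
        rw [hUg, dotProduct_add, dotProduct_smul, dotProduct_smul,
          e3, e4, e5]
        simp only [smul_eq_mul]
      rw [hval] at h0
      -- compute the real part
      have hre : (((r ^ 2 : ℝ) : ℂ) * (starRingEnd ℂ c * G)
            + (-(r : ℂ) * G) * (H - (r : ℂ) * (starRingEnd ℂ c) * G)).re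
          = r ^ 2 * (c.re * G.re) - r * G.re * H.re + r ^ 2 * (c.re * G.re ^ 2) := by
        simp only [Complex.add_re, Complex.mul_re, Complex.mul_im, Complex.sub_re,
          Complex.sub_im, Complex.ofReal_re, Complex.ofReal_im, Complex.neg_re,
          Complex.neg_im, Complex.conj_re, Complex.conj_im, ← hGim, ← hHim]
        ring
      rw [hre] at h0
      -- contradiction via choice of r
      have hrlt : r * |c.re| * (1 + G.re) < H.re := by
        rw [hrdef]
        rw [div_mul_eq_mul_div, div_mul_eq_mul_div, div_lt_iff₀ hden]
        nlinarith [abs_nonneg c.re]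
      nlinarith [mul_lt_mul_of_pos_left hrlt (mul_pos hrpos hGre),
        mul_le_mul_of_nonneg_left (le_abs_self c.re)
          (by positivity : (0:ℝ) ≤ r ^ 2 * G.re * (1 + G.re)),
        mul_pos hrpos hGre]
end
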